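/- The DCT-I diagonalizes symmetric Toeplitz-plus-Hankel matrices of the form B = toep(a) + J toep(Ja): for any a ∈ ℝ^{n}, C_n^T B C_n is a diagonal matrix, where toep(a) is the symmetric Toeplitz matrix with first column a and J is the counter-identity (flip) matrix. -/

import Mathlib

open Real Matrix

section DCTHelpers
open Finset


private def dd (m : ℕ) (q : ℤ) : ℕ :=
  min ((q % (2*m)).toNat) (2*m - (q % (2*m)).toNat)

private lemma dd_period (m : ℕ) (q : ℤ) : dd m (q + 2*m) = dd m q := by
  have : (q + 2*(m:ℤ)) % (2*m) = q % (2*m) := by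
    rw [show q + 2*(m:ℤ) = q + 2*(m:ℤ)*1 by ring, Int.add_mul_emod_self_left]
  simp only [dd, this]

private lemma emod_lt' (m : ℕ) (hm : 1 ≤ m) (q : ℤ) :
    0 ≤ q % (2*m) ∧ q % (2*m) < 2*m := by
  have h2 : (0:ℤ) < 2*m := by positivity
  exact ⟨Int.emod_nonneg q (by omega), Int.emod_lt_of_pos q h2⟩

private lemma dd_neg (m : ℕ) (hm : 1 ≤ m) (q : ℤ) : dd m (-q) = dd m q := by
  have h1 := emod_lt' m hm q
  have h2 := emod_lt' m hm (-q)
  have h3 : (q % (2*m) + (-q) % (2*m)) % (2*m) = 0 := by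
    rw [← Int.add_emod]
    simp
  have h4 : q % (2*m) + (-q) % (2*m) = 0 ∨ q % (2*m) + (-q) % (2*m) = 2*m := by
    rcases Int.emod_emod_of_dvd q (dvd_refl (2*(m:ℤ))) with _
    have hd : (2*(m:ℤ)) ∣ (q % (2*m) + (-q) % (2*m)) := Int.dvd_of_emod_eq_zero h3
    obtain ⟨t, ht⟩ := hd
    have ht0 : (0:ℤ) ≤ 2*m*t := by omega
    have ht2 : 2*(m:ℤ)*t < 2*(2*m) := by omega
    have hmpos : (0:ℤ) < 2*m := by positivity
    have : (0:ℤ) ≤ t := nonneg_of_mul_nonneg_right ht0 hmpos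
    have : t < 2 := by
      by_contra hc
      push_neg at hc
      nlinarith
    interval_cases t <;> omega
  simp only [dd]
  omega

private lemma dd_small (m : ℕ) (hm : 1 ≤ m) (q : ℤ) (h : q.natAbs ≤ m) :
    dd m q = q.natAbs := by
  rcases le_or_gt 0 q with hq | hq
  · have : q % (2*m) = q := Int.emod_eq_of_lt hq (by omega)
    simp only [dd, this]; omega
  · rw [show q = -(-q) by ring, dd_neg m hm]
    have hq' : (0:ℤ) ≤ -q := by omega
    have : (-q) % (2*m) = -q := Int.emod_eq_of_lt hq' (by omega)
    simp only [dd, this]; omega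

private lemma dd_mid (m : ℕ) (hm : 1 ≤ m) (q : ℤ) (h0 : 0 ≤ q) (h2 : q ≤ 2*m) :
    dd m q = min q.toNat (2*m - q.toNat) := by
  rcases eq_or_lt_of_le h2 with h | h
  · have : q % (2*m) = 0 := by rw [← h]; simp [Int.emod_self]
    simp only [dd, this]; omega
  · have : q % (2*m) = q := Int.emod_eq_of_lt h0 h
    simp only [dd, this]

noncomputable def cc (m j : ℕ) (q : ℤ) : ℝ := Real.cos (π * j * q / m)
noncomputable def ss (m j : ℕ) (q : ℤ) : ℝ := Real.sin (π * j * q / m)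

lemma cc_period (m j : ℕ) (hm : 1 ≤ m) (q : ℤ) : cc m j (q + 2*m) = cc m j q := by
  have hm' : (m:ℝ) ≠ 0 := by positivity
  have h : π * j * ((q:ℝ) + 2*m) / m = π * j * q / m + (j:ℤ) * (2*π) := by
    push_cast; field_simp
  simp only [cc]; push_cast; rw [h, Real.cos_add_int_mul_two_pi]

lemma ss_period (m j : ℕ) (hm : 1 ≤ m) (q : ℤ) : ss m j (q + 2*m) = ss m j q := by
  have hm' : (m:ℝ) ≠ 0 := by positivity
  have h : π * j * ((q:ℝ) + 2*m) / m = π * j * q / m + (j:ℤ) * (2*π) := by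
    push_cast; field_simp
  simp only [ss]; push_cast; rw [h, Real.sin_add_int_mul_two_pi]

lemma cc_neg (m j : ℕ) (q : ℤ) : cc m j (-q) = cc m j q := by
  simp only [cc]; push_cast
  rw [show π * j * (-(q:ℝ)) / m = -(π * j * q / m) by ring, Real.cos_neg]

lemma ss_neg (m j : ℕ) (q : ℤ) : ss m j (-q) = -ss m j q := by
  simp only [ss]; push_cast
  rw [show π * j * (-(q:ℝ)) / m = -(π * j * q / m) by ring, Real.sin_neg]

lemma sum_shift_one (f : ℤ → ℝ) (N : ℕ) (hf : ∀ q, f (q + N) = f q) :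
    ∑ p ∈ range N, f ((p:ℤ) + 1) = ∑ p ∈ range N, f p := by
  rcases Nat.eq_zero_or_pos N with h | h
  · simp [h]
  obtain ⟨M, rfl⟩ : ∃ M, N = M + 1 := ⟨N - 1, by omega⟩
  rw [Finset.sum_range_succ, Finset.sum_range_succ' (fun p => f (p:ℤ)) M]
  have h1 : f ((M:ℤ) + 1) = f 0 := by
    have := hf 0; rw [zero_add] at this; rw [← this]; norm_num
  rw [h1]
  have h2 : ∑ x ∈ range M, f ((x:ℤ) + 1) = ∑ k ∈ range M, f (((k+1 : ℕ)):ℤ) := by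
    apply Finset.sum_congr rfl; intro p _; push_cast; ring_nf
  rw [h2]
  push_cast
  ring

lemma sum_shift (f : ℤ → ℝ) (N : ℕ) (hf : ∀ q, f (q + N) = f q) (k : ℤ) :
    ∑ p ∈ range N, f ((p:ℤ) + k) = ∑ p ∈ range N, f p := by
  induction k using Int.induction_on with
  | zero => simp
  | succ i ih =>
    have h2 := sum_shift_one (fun q => f (q + i)) N (fun q => by
      simpa [add_right_comm] using hf (q + i))
    calc ∑ p ∈ range N, f ((p:ℤ) + (i+1))
        = ∑ p ∈ range N, f (((p:ℤ) + 1) + i) := by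
          apply Finset.sum_congr rfl; intro p _; ring_nf
      _ = ∑ p ∈ range N, f ((p:ℤ) + i) := h2
      _ = _ := ih
  | pred i ih =>
    have h2 := sum_shift_one (fun q => f (q + (-(i:ℤ)-1))) N (fun q => by
      simpa [add_right_comm] using hf (q + (-(i:ℤ)-1)))
    have h3 : ∑ p ∈ range N, f ((p:ℤ) + -(i:ℤ)) = ∑ p ∈ range N, f ((p:ℤ) + (-(i:ℤ)-1)) := by
      rw [← h2]; apply Finset.sum_congr rfl; intro p _; congr 1; ring
    calc ∑ p ∈ range N, f ((p:ℤ) + (-(i:ℤ)-1)) = ∑ p ∈ range N, f ((p:ℤ) + -(i:ℤ)) := h3.symm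
      _ = _ := ih

lemma sum_reflect (f : ℤ → ℝ) (N : ℕ) (hf : ∀ q, f (q + N) = f q) :
    ∑ p ∈ range N, f (-(p:ℤ)) = ∑ p ∈ range N, f p := by
  have h1 : ∑ p ∈ range N, f (-(p:ℤ)) = ∑ p ∈ range N, f ((N:ℤ) - p) := by
    apply Finset.sum_congr rfl; intro p _
    rw [show (N:ℤ) - p = -(p:ℤ) + N by ring, hf]
  rw [h1, ← Finset.sum_range_reflect (fun p => f ((N:ℤ) - p)) N]
  rw [← sum_shift_one f N hf]
  apply Finset.sum_congr rfl
  intro p hp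
  simp only [Finset.mem_range] at hp
  congr 1
  have : ((N - 1 - p : ℕ) : ℤ) = (N:ℤ) - 1 - p := by omega
  rw [this]; ring

lemma sum_fold (f : ℤ → ℝ) (m : ℕ) (hm : 1 ≤ m) (hf : ∀ q, f (q + 2*m) = f q)
    (hev : ∀ q, f (-q) = f q) :
    ∑ p ∈ range (m+1), (if p = 0 ∨ p = m then (1:ℝ) else 2) * f p
      = ∑ p ∈ range (2*m), f p := by
  obtain ⟨M, rfl⟩ : ∃ M, m = M + 1 := ⟨m - 1, by omega⟩
  -- split RHS
  have hsplit : ∑ p ∈ range (2*(M+1)), f p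
      = ∑ p ∈ range (M+2), f p + ∑ i ∈ range M, f ((M+2+i : ℕ)) := by
    have h1 : 2*(M+1) = (M+2) + M := by omega
    rw [h1, Finset.sum_range_add]
  -- second piece equals interior sum
  have htail : ∑ i ∈ range M, f ((M+2+i : ℕ)) = ∑ i ∈ range M, f ((i+1 : ℕ)) := by
    have h2 : ∀ i ∈ range M, f ((M+2+i : ℕ)) = f ((M-i : ℕ)) := by
      intro i hi
      simp only [Finset.mem_range] at hi
      have e1 : f ((M+2+i : ℕ)) = f (-((M:ℤ)+2+i)) := by rw [hev]; congr 1
      have e2 : f (-((M:ℤ)+2+i) + 2*(M+1)) = f (-((M:ℤ)+2+i)) := hf _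
      rw [e1, ← e2]
      congr 1
      push_cast
      omega
    rw [Finset.sum_congr rfl h2, ← Finset.sum_range_reflect (fun i => f ((i+1 : ℕ))) M]
    apply Finset.sum_congr rfl
    intro i hi
    simp only [Finset.mem_range] at hi
    congr 2
    omega
  -- split LHS
  have hlhs : ∑ p ∈ range (M+2), (if p = 0 ∨ p = M+1 then (1:ℝ) else 2) * f p
      = ∑ p ∈ range (M+2), f p + ∑ i ∈ range M, f ((i+1 : ℕ)) := by
    have h3 : ∀ p ∈ range (M+2), (if p = 0 ∨ p = M+1 then (1:ℝ) else 2) * f p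
        = f p + (if p = 0 ∨ p = M+1 then (0:ℝ) else 1) * f p := by
      intro p _
      by_cases h : p = 0 ∨ p = M+1 <;> simp [h] <;> ring
    rw [Finset.sum_congr rfl h3, Finset.sum_add_distrib]
    congr 1
    rw [Finset.sum_range_succ, Finset.sum_range_succ']
    simp only [Nat.add_eq_zero, and_false, false_or, or_true, if_pos, if_true]
    norm_num
    apply Finset.sum_congr rfl
    intro i hi
    simp only [Finset.mem_range] at hi
    rw [if_neg (by omega)]
  rw [hsplit, htail, ← hlhs]



lemma cos_sum_zero (m : ℕ) (hm : 1 ≤ m) (r : ℤ) (hr : ¬ ((2*(m:ℤ)) ∣ r)) :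
    ∑ p ∈ range (2*m), Real.cos (π * r * p / m) = 0 := by
  have hm' : (m:ℝ) ≠ 0 := by positivity
  have hmc : (m:ℂ) ≠ 0 := Nat.cast_ne_zero.mpr (by omega)
  set z : ℂ := Complex.exp ((↑(π * r / m) : ℂ) * Complex.I) with hz
  have hz1 : z ≠ 1 := by
    intro h
    rw [hz, Complex.exp_eq_one_iff] at h
    obtain ⟨t, ht⟩ := h
    have ht2 : ((π * r / m : ℝ) : ℂ) = (((t:ℝ) * (2*π) : ℝ) : ℂ) :=
      mul_right_cancel₀ Complex.I_ne_zero (by rw [ht]; push_cast; ring)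
    have ht3 : π * (r:ℝ) / m = t * (2*π) := by exact_mod_cast ht2
    have hpi : (π:ℝ) ≠ 0 := Real.pi_ne_zero
    have ht4 : (r:ℝ) = 2 * t * m := by
      field_simp at ht3
      apply mul_right_cancel₀ hpi
      linear_combination π * ht3
    have : r = 2 * t * m := by exact_mod_cast ht4
    exact hr ⟨t, by linear_combination this⟩
  have hz2 : z ^ (2*m) = 1 := by
    rw [hz, ← Complex.exp_nat_mul]
    have : (2*m : ℕ) * ((↑(π * r / m) : ℂ) * Complex.I) = (r : ℂ) * (2 * π * Complex.I) := by
      push_cast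
      field_simp
    rw [this, Complex.exp_int_mul_two_pi_mul_I r]
  have hgeom : ∑ p ∈ range (2*m), z ^ p = 0 := by
    rw [geom_sum_eq hz1, hz2]
    simp
  have hre : ∀ p : ℕ, (z ^ p).re = Real.cos (π * r * p / m) := by
    intro p
    rw [hz, ← Complex.exp_nat_mul]
    have : (p:ℂ) * ((↑(π * r / m) : ℂ) * Complex.I) = (↑(π * r * p / m) : ℝ) * Complex.I := by
      push_cast; ring
    rw [this, Complex.exp_ofReal_mul_I_re]
  calc ∑ p ∈ range (2*m), Real.cos (π * r * p / m) = ∑ p ∈ range (2*m), (z ^ p).re := by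
        exact Finset.sum_congr rfl fun p _ => (hre p).symm
    _ = (∑ p ∈ range (2*m), z ^ p).re := (Complex.re_sum _ _).symm
    _ = 0 := by rw [hgeom]; simp

lemma ortho (m : ℕ) (hm : 1 ≤ m) (j l : ℕ) (hj : j ≤ m) (hl : l ≤ m) (hne : j ≠ l) :
    ∑ p ∈ range (m+1), (if p = 0 ∨ p = m then (1:ℝ) else 2) * (cc m j p * cc m l p) = 0 := by
  have hper : ∀ q : ℤ, cc m j (q + 2*m) * cc m l (q + 2*m) = cc m j q * cc m l q := by
    intro q; rw [cc_period m j hm, cc_period m l hm]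
  have hev : ∀ q : ℤ, cc m j (-q) * cc m l (-q) = cc m j q * cc m l q := by
    intro q; rw [cc_neg, cc_neg]
  rw [sum_fold (fun q => cc m j q * cc m l q) m hm hper hev]
  have hpt : ∀ p ∈ range (2*m), cc m j (p:ℤ) * cc m l (p:ℤ)
      = (Real.cos (π * (((j:ℤ) - l : ℤ) : ℝ) * p / m) + Real.cos (π * (((j:ℤ) + l : ℤ) : ℝ) * p / m)) / 2 := by
    intro p _
    simp only [cc]
    push_cast
    rw [show π * ((j:ℝ) - l) * p / m = π * j * p / m - π * l * p / m by ring,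
        show π * ((j:ℝ) + l) * p / m = π * j * p / m + π * l * p / m by ring,
        Real.cos_sub, Real.cos_add]
    ring
  rw [Finset.sum_congr rfl hpt, ← Finset.sum_div, Finset.sum_add_distrib]
  have hd1 : ¬ ((2*(m:ℤ)) ∣ ((j:ℤ) - l)) := by
    intro h
    have h' : (((2*m:ℕ)):ℤ) ∣ ((j:ℤ) - l) := by push_cast; exact h
    rw [← Int.dvd_natAbs, Int.natCast_dvd_natCast] at h'
    have h3 : ((j:ℤ) - l).natAbs ≠ 0 := by omega
    have := Nat.le_of_dvd (by omega) h'
    omega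
  have hd2 : ¬ ((2*(m:ℤ)) ∣ ((j:ℤ) + l)) := by
    intro h
    have h' : (((2*m:ℕ)):ℤ) ∣ ((j:ℤ) + l) := by push_cast; exact h
    rw [← Int.dvd_natAbs, Int.natCast_dvd_natCast] at h'
    have h3 : ((j:ℤ) + l).natAbs ≠ 0 := by omega
    have := Nat.le_of_dvd (by omega) h'
    omega
  rw [cos_sum_zero m hm ((j:ℤ) - l) hd1, cos_sum_zero m hm ((j:ℤ) + l) hd2]
  norm_num

lemma dd_hankel (m : ℕ) (hm : 1 ≤ m) (k p : ℕ) (hk : k ≤ m) (hp : p ≤ m) :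
    dd m ((p:ℤ) + k) = m - ((m:ℤ) - k - p).natAbs := by
  rw [dd_mid m hm ((p:ℤ) + k) (by omega) (by omega)]
  have h1 : ((p:ℤ) + k).toNat = p + k := by omega
  rw [h1]
  omega

lemma eigen (m : ℕ) (hm : 1 ≤ m) (a : ℕ → ℝ) (j k : ℕ) (hk : k ≤ m) :
    ∑ p ∈ range (m+1), (if p = 0 ∨ p = m then (1:ℝ) else 2) *
      ((a (((k:ℤ) - p).natAbs) + a (m - (((m:ℤ) - k - p).natAbs))) * cc m j p)
    = (2 * ∑ q ∈ range (2*m), a (dd m q) * cc m j q) * cc m j k := by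
  -- pointwise rewrite to the symmetric kernel
  have hstepA : ∀ p ∈ range (m+1), (if p = 0 ∨ p = m then (1:ℝ) else 2) *
      ((a (((k:ℤ) - p).natAbs) + a (m - (((m:ℤ) - k - p).natAbs))) * cc m j p)
      = (if p = 0 ∨ p = m then (1:ℝ) else 2) *
        ((a (dd m ((p:ℤ) - k)) + a (dd m ((p:ℤ) + k))) * cc m j p) := by
    intro p hp
    simp only [Finset.mem_range] at hp
    have hsym : ((k:ℤ) - p).natAbs = ((p:ℤ) - k).natAbs := by omega
    rw [hsym, dd_small m hm ((p:ℤ) - k) (by omega), dd_hankel m hm k p hk (by omega)]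
  rw [Finset.sum_congr rfl hstepA]
  have hper : ∀ q : ℤ, (a (dd m ((q + 2*m) - k)) + a (dd m ((q + 2*m) + k))) * cc m j (q + 2*m)
      = (a (dd m (q - k)) + a (dd m (q + k))) * cc m j q := by
    intro q
    rw [cc_period m j hm, show (q + 2*(m:ℤ)) - k = (q - k) + 2*m by ring,
        show (q + 2*(m:ℤ)) + k = (q + k) + 2*m by ring, dd_period, dd_period]
  have hev : ∀ q : ℤ, (a (dd m ((-q) - k)) + a (dd m ((-q) + k))) * cc m j (-q)
      = (a (dd m (q - k)) + a (dd m (q + k))) * cc m j q := by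
    intro q
    rw [cc_neg, show (-q) - (k:ℤ) = -(q + k) by ring, show (-q) + (k:ℤ) = -(q - k) by ring,
        dd_neg m hm, dd_neg m hm]
    ring
  rw [sum_fold (fun q => (a (dd m (q - k)) + a (dd m (q + k))) * cc m j q) m hm hper hev]
  -- split into two sums
  have hsplit : ∑ p ∈ range (2*m), (a (dd m ((p:ℤ) - k)) + a (dd m ((p:ℤ) + k))) * cc m j p
      = ∑ p ∈ range (2*m), a (dd m ((p:ℤ) - k)) * cc m j p
        + ∑ p ∈ range (2*m), a (dd m ((p:ℤ) + k)) * cc m j p := by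
    rw [← Finset.sum_add_distrib]
    exact Finset.sum_congr rfl fun p _ => by ring
  -- second equals first by reflection
  have hrefl : ∑ p ∈ range (2*m), a (dd m ((p:ℤ) + k)) * cc m j p
      = ∑ p ∈ range (2*m), a (dd m ((p:ℤ) - k)) * cc m j p := by
    have hper2 : ∀ q : ℤ, a (dd m ((q + 2*m) + k)) * cc m j (q + 2*m)
        = a (dd m (q + k)) * cc m j q := by
      intro q
      rw [cc_period m j hm, show (q + 2*(m:ℤ)) + k = (q + k) + 2*m by ring, dd_period]
    have := sum_reflect (fun q => a (dd m (q + k)) * cc m j q) (2*m) hper2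
    rw [← this]
    exact Finset.sum_congr rfl fun p _ => by
      show a (dd m ((-(p:ℤ)) + k)) * cc m j (-(p:ℤ)) = _
      rw [cc_neg, show (-(p:ℤ)) + k = -((p:ℤ) - k) by ring, dd_neg m hm]
  -- shift
  have hshift : ∑ p ∈ range (2*m), a (dd m ((p:ℤ) - k)) * cc m j p
      = ∑ p ∈ range (2*m), a (dd m (p:ℤ)) * cc m j ((p:ℤ) + k) := by
    have hper3 : ∀ q : ℤ, a (dd m ((q + 2*m) - k)) * cc m j (q + 2*m)
        = a (dd m (q - k)) * cc m j q := by
      intro q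
      rw [cc_period m j hm, show (q + 2*(m:ℤ)) - k = (q - k) + 2*m by ring, dd_period]
    have := sum_shift (fun q => a (dd m (q - k)) * cc m j q) (2*m) hper3 (k:ℤ)
    rw [← this]
    exact Finset.sum_congr rfl fun p _ => by
      show a (dd m (((p:ℤ) + k) - k)) * cc m j ((p:ℤ) + k) = _
      rw [show ((p:ℤ) + k) - k = (p:ℤ) by ring]
  -- cosine addition
  have hcos : ∀ q : ℤ, cc m j (q + k) = cc m j q * cc m j (k:ℤ) - ss m j q * ss m j (k:ℤ) := by
    intro q
    simp only [cc, ss]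
    push_cast
    rw [show π*(j:ℝ)*((q:ℝ)+(k:ℝ))/m = π*j*q/m + π*j*k/m by ring, Real.cos_add]
  -- odd sum vanishes
  have hodd : ∑ p ∈ range (2*m), a (dd m (p:ℤ)) * ss m j p = 0 := by
    have hper4 : ∀ q : ℤ, a (dd m (q + 2*m)) * ss m j (q + 2*m) = a (dd m q) * ss m j q := by
      intro q; rw [ss_period m j hm, dd_period]
    have h1 := sum_reflect (fun q => a (dd m q) * ss m j q) (2*m) hper4
    have h2 : ∑ p ∈ range (2*m), a (dd m (-(p:ℤ))) * ss m j (-(p:ℤ))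
        = -∑ p ∈ range (2*m), a (dd m (p:ℤ)) * ss m j p := by
      rw [← Finset.sum_neg_distrib]
      exact Finset.sum_congr rfl fun p _ => by rw [ss_neg, dd_neg m hm]; ring
    have h3 := h1.symm.trans h2
    linarith
  rw [hsplit, hrefl, hshift]
  have hexp : ∑ p ∈ range (2*m), a (dd m (p:ℤ)) * cc m j ((p:ℤ) + k)
      = (∑ p ∈ range (2*m), a (dd m (p:ℤ)) * cc m j p) * cc m j (k:ℤ)
        - (∑ p ∈ range (2*m), a (dd m (p:ℤ)) * ss m j p) * ss m j (k:ℤ) := by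
    rw [Finset.sum_mul, Finset.sum_mul, ← Finset.sum_sub_distrib]
    exact Finset.sum_congr rfl fun p _ => by rw [hcos]; ring
  rw [hexp, hodd]
  ring

end DCTHelpers

/-- The DCT-I diagonalizes Toeplitz-plus-Hankel matrices of the form
`B = toep(a) + J·toep(Ja)`: for any `a ∈ ℝⁿ`, `C_nᵀ B C_n` is diagonal. -/
theorem dct1_diagonalizes_toeplitz_hankel (n : ℕ) (hn : 2 ≤ n) (a : ℕ → ℝ)
    (C T T' J : Matrix (Fin n) (Fin n) ℝ)
    (hC : ∀ k l : Fin n, C k l =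
      (if (k : ℕ) = 0 ∨ (k : ℕ) = n - 1 then 1 else 2) / Real.sqrt (2 * n - 2) *
        Real.cos (Real.pi * k * l / (n - 1)))
    (hT : ∀ k l : Fin n, T k l = a (((k : ℕ) : ℤ) - ((l : ℕ) : ℤ)).natAbs)
    (hJ : ∀ k l : Fin n, J k l = if (k : ℕ) + (l : ℕ) = n - 1 then 1 else 0)
    (hT' : ∀ k l : Fin n, T' k l = a (n - 1 - (((k : ℕ) : ℤ) - ((l : ℕ) : ℤ)).natAbs)) :
    ∃ d : Fin n → ℝ, Cᵀ * (T + J * T') * C = Matrix.diagonal d := by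
  obtain ⟨m, rfl⟩ : ∃ m, n = m + 1 := ⟨n - 1, by omega⟩
  have hm : 1 ≤ m := by omega
  set s : ℝ := Real.sqrt (2 * (↑(m+1) : ℝ) - 2) with hs
  -- rewrite C entries
  have hCc : ∀ k l : Fin (m+1), C k l
      = (if (k : ℕ) = 0 ∨ (k : ℕ) = m then (1:ℝ) else 2) / s * cc m (l:ℕ) ((k:ℕ) : ℤ) := by
    intro k l
    rw [hC]
    simp only [Nat.add_sub_cancel, cc]
    push_cast
    ring_nf
  -- collapse B entries
  have hB : ∀ k p : Fin (m+1), (T + J * T') k p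
      = a (((k:ℕ) : ℤ) - ((p:ℕ) : ℤ)).natAbs + a (m - ((m:ℤ) - (k:ℕ) - (p:ℕ)).natAbs) := by
    intro k p
    have hk : (k:ℕ) ≤ m := by omega
    set r : Fin (m+1) := ⟨m - (k:ℕ), by omega⟩ with hr
    rw [Matrix.add_apply, Matrix.mul_apply, hT]
    have hsum : ∑ q : Fin (m+1), J k q * T' q p = T' r p := by
      rw [Finset.sum_eq_single r]
      · rw [hJ, if_pos (by simp only [hr]; omega), one_mul]
      · intro q _ hq
        rw [hJ, if_neg, zero_mul]
        intro hc
        exact hq (Fin.ext (by simp only [hr]; omega))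
      · intro h; exact absurd (Finset.mem_univ r) h
    rw [hsum, hT']
    have hidx : (m+1) - 1 - (((r:ℕ) : ℤ) - ((p:ℕ) : ℤ)).natAbs
        = m - ((m:ℤ) - (k:ℕ) - (p:ℕ)).natAbs := by
      have hrv : (r:ℕ) = m - (k:ℕ) := rfl
      rw [hrv]
      omega
    rw [hidx]
  -- the candidate diagonal
  refine ⟨fun j => (Cᵀ * (T + J * T') * C) j j, ?_⟩
  ext j l
  by_cases hjl : j = l
  · subst hjl
    rw [Matrix.diagonal_apply_eq]
  · rw [Matrix.diagonal_apply_ne _ hjl]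
    have hjm : (j:ℕ) ≤ m := by omega
    have hlm : (l:ℕ) ≤ m := by omega
    have hjlne : (j:ℕ) ≠ (l:ℕ) := fun h => hjl (Fin.ext h)
    set Λ : ℝ := ∑ q ∈ Finset.range (2*m), a (dd m q) * cc m (l:ℕ) q with hΛ
    -- inner sums
    have hinner : ∀ k : Fin (m+1), ∑ p : Fin (m+1), (T + J * T') k p * C p l
        = (1/s) * ((2 * Λ) * cc m (l:ℕ) ((k:ℕ) : ℤ)) := by
      intro k
      have hk : (k:ℕ) ≤ m := by omega
      have step1 : ∀ p : Fin (m+1), (T + J * T') k p * C p l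
          = (1/s) * ((if (p:ℕ) = 0 ∨ (p:ℕ) = m then (1:ℝ) else 2) *
              ((a ((((k:ℕ):ℤ) - ((p:ℕ):ℤ)).natAbs) + a (m - ((m:ℤ) - (k:ℕ) - (p:ℕ)).natAbs))
                * cc m (l:ℕ) ((p:ℕ):ℤ))) := by
        intro p
        rw [hB, hCc]
        ring
      rw [Finset.sum_congr rfl (fun p _ => step1 p)]
      rw [← Finset.mul_sum]
      congr 1
      rw [Fin.sum_univ_eq_sum_range (fun p : ℕ => (if p = 0 ∨ p = m then (1:ℝ) else 2) *
              ((a ((((k:ℕ):ℤ) - (p:ℤ)).natAbs) + a (m - ((m:ℤ) - (k:ℕ) - p).natAbs))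
                * cc m (l:ℕ) (p:ℤ))) (m+1)]
      exact eigen m hm a (l:ℕ) (k:ℕ) hk
    -- outer sum
    have houter : (Cᵀ * (T + J * T') * C) j l
        = ∑ k : Fin (m+1), C k j * ((1/s) * ((2 * Λ) * cc m (l:ℕ) ((k:ℕ) : ℤ))) := by
      rw [Matrix.mul_apply]
      have h1 : ∀ p : Fin (m+1), (Cᵀ * (T + J * T')) j p * C p l
          = ∑ k : Fin (m+1), C k j * ((T + J * T') k p * C p l) := by
        intro p
        rw [Matrix.mul_apply, Finset.sum_mul]
        exact Finset.sum_congr rfl fun k _ => by rw [Matrix.transpose_apply]; ring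
      rw [Finset.sum_congr rfl (fun p _ => h1 p), Finset.sum_comm]
      exact Finset.sum_congr rfl fun k _ => by rw [← Finset.mul_sum, hinner k]
    rw [houter]
    have step2 : ∀ k : Fin (m+1), C k j * ((1/s) * ((2 * Λ) * cc m (l:ℕ) ((k:ℕ) : ℤ)))
        = ((2 * Λ) * (1/s) * (1/s)) * ((if (k:ℕ) = 0 ∨ (k:ℕ) = m then (1:ℝ) else 2) *
            (cc m (j:ℕ) ((k:ℕ):ℤ) * cc m (l:ℕ) ((k:ℕ):ℤ))) := by
      intro k
      rw [hCc]
      ring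
    rw [Finset.sum_congr rfl (fun k _ => step2 k), ← Finset.mul_sum]
    rw [Fin.sum_univ_eq_sum_range (fun k : ℕ => (if k = 0 ∨ k = m then (1:ℝ) else 2) *
            (cc m (j:ℕ) (k:ℤ) * cc m (l:ℕ) (k:ℤ))) (m+1)]
    rw [ortho m hm (j:ℕ) (l:ℕ) hjm hlm hjlne]
    ring
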